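/- Third discrete Frenet equation (inscribed case): for a discrete curve satisfying the positive-twist condition, for every i ∈ ℤ one has (DBᵉ)ᵢ = −τᵢ • Nᵛᵢ, where τᵢ := ‖(DBᵉ)ᵢ‖. -/

import Mathlib

open RealInnerProductSpace

noncomputable section

/-- Points of a discrete curve live in `ℝ³` with the Euclidean norm. -/
abbrev E3 := EuclideanSpace ℝ (Fin 3)

/-- The cross product on `ℝ³`. -/
def cross3 (u v : E3) : E3 :=
  WithLp.toLp 2 ![u 1 * v 2 - u 2 * v 1, u 2 * v 0 - u 0 * v 2, u 0 * v 1 - u 1 * v 0]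


lemma cross3_apply0 (u v : E3) : cross3 u v 0 = u 1 * v 2 - u 2 * v 1 := rfl
lemma cross3_apply1 (u v : E3) : cross3 u v 1 = u 2 * v 0 - u 0 * v 2 := rfl
lemma cross3_apply2 (u v : E3) : cross3 u v 2 = u 0 * v 1 - u 1 * v 0 := rfl

lemma triple3 (a b c : E3) :
    cross3 a (cross3 b c) = ⟪a, c⟫ • b - ⟪a, b⟫ • c := by
  ext i
  fin_cases i <;>
    simp [cross3_apply0, cross3_apply1, cross3_apply2, PiLp.inner_apply,
      Fin.sum_univ_three, PiLp.sub_apply, PiLp.smul_apply, smul_eq_mul] <;> ring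

lemma cross3_add_left (a b c : E3) :
    cross3 (a + b) c = cross3 a c + cross3 b c := by
  ext i
  fin_cases i <;>
    simp [cross3_apply0, cross3_apply1, cross3_apply2, PiLp.add_apply] <;> ring

lemma cross3_smul_left (r : ℝ) (a b : E3) :
    cross3 (r • a) b = r • cross3 a b := by
  ext i
  fin_cases i <;>
    simp [cross3_apply0, cross3_apply1, cross3_apply2, PiLp.smul_apply, smul_eq_mul] <;> ring

lemma cross3_zero_right (b : E3) : cross3 b 0 = 0 := by
  ext i
  fin_cases i <;> simp [cross3_apply0, cross3_apply1, cross3_apply2]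

lemma inner_cross3_left (a b : E3) : ⟪a, cross3 a b⟫ = 0 := by
  simp [cross3_apply0, cross3_apply1, cross3_apply2, PiLp.inner_apply, Fin.sum_univ_three]
  ring

lemma inner_cross3_right (a b : E3) : ⟪b, cross3 a b⟫ = 0 := by
  simp [cross3_apply0, cross3_apply1, cross3_apply2, PiLp.inner_apply, Fin.sum_univ_three]
  ring

lemma inner_cross3_swap (a b c : E3) : ⟪a, cross3 b c⟫ = -⟪b, cross3 a c⟫ := by
  simp [cross3_apply0, cross3_apply1, cross3_apply2, PiLp.inner_apply, Fin.sum_univ_three]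
  ring

lemma parallel_of_cross3_eq_zero {a b : E3} (h : cross3 a b = 0) (hb : b ≠ 0) :
    a = (⟪a, b⟫ / ‖b‖ ^ 2) • b := by
  have hba : cross3 b a = 0 := by
    ext i
    have h0 := congrArg (fun x : E3 => x 0) h; have h1 := congrArg (fun x : E3 => x 1) h; have h2 := congrArg (fun x : E3 => x 2) h
    simp [cross3_apply0, cross3_apply1, cross3_apply2] at h0 h1 h2
    fin_cases i <;> simp [cross3_apply0, cross3_apply1, cross3_apply2] <;> linarith
  have ht := triple3 b b a
  rw [hba, cross3_zero_right] at ht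
  have key : ⟪b, a⟫ • b = ⟪b, b⟫ • a := sub_eq_zero.mp ht.symm
  rw [real_inner_self_eq_norm_sq] at key
  have hnb : (‖b‖ : ℝ) ^ 2 ≠ 0 := pow_ne_zero _ (norm_ne_zero_iff.mpr hb)
  calc a = (‖b‖ ^ 2)⁻¹ • ((‖b‖ ^ 2) • a) := by
        rw [smul_smul, inv_mul_cancel₀ hnb, one_smul]
    _ = (‖b‖ ^ 2)⁻¹ • (⟪b, a⟫ • b) := by rw [key]
    _ = (⟪a, b⟫ / ‖b‖ ^ 2) • b := by
        rw [smul_smul, real_inner_comm b a]; congr 1; ring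

/-- Third discrete Frenet equation (inscribed case): under the positive-twist condition,
`(DBᵉ)ᵢ = −τᵢ • Nᵛᵢ` with `τᵢ = ‖(DBᵉ)ᵢ‖`. -/
theorem third_discrete_frenet_equation
    (γ T N B : ℤ → E3)
    (hlen : ∀ i : ℤ, ‖γ (i + 1) - γ i‖ = 1)
    (hmid : ∀ i : ℤ, Even i → γ i = (2 : ℝ)⁻¹ • (γ (i + 1) + γ (i - 1)))
    (hT : ∀ i : ℤ, T i = γ (i + 1) - γ i)
    (hcross : ∀ i : ℤ, Even i → cross3 (T i) (T (i + 1)) ≠ 0)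
    (hBeven : ∀ i : ℤ, Even i →
      B i = ‖cross3 (T i) (T (i + 1))‖⁻¹ • cross3 (T i) (T (i + 1)))
    (hBodd : ∀ i : ℤ, Odd i → B i = B (i - 1))
    (hN : ∀ i : ℤ, N i = cross3 (B i) (T i))
    (Tv Nv Bv : ℤ → E3)
    (hMT : ∀ i : ℤ, T (i + 1) + T i ≠ 0)
    (hMN : ∀ i : ℤ, N (i + 1) + N i ≠ 0)
    (hMB : ∀ i : ℤ, B (i + 1) + B i ≠ 0)
    (hTv : ∀ i : ℤ, Tv i = ‖T (i + 1) + T i‖⁻¹ • (T (i + 1) + T i))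
    (hNv : ∀ i : ℤ, Nv i = ‖N (i + 1) + N i‖⁻¹ • (N (i + 1) + N i))
    (hBv : ∀ i : ℤ, Bv i = ‖B (i + 1) + B i‖⁻¹ • (B (i + 1) + B i))
    (htwist : ∀ i : ℤ, Odd i → ⟪B (i + 1), N i⟫ ≤ 0)
    : ∀ i : ℤ, B (i + 1) - B i = -(‖B (i + 1) - B i‖) • Nv i := by
  intro i
  rcases Int.even_or_odd i with he | ho
  · -- even case: B (i+1) = B i
    have h1 : B (i + 1) = B i := by
      have h := hBodd (i + 1) (Even.add_one he)
      simpa using h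
    simp [h1]
  · -- odd case
    have hev1 : Even (i + 1) := Odd.add_one ho
    have hevm : Even (i - 1) := Odd.sub_odd ho odd_one
    -- T (i+1) = T i
    have hTT : T (i + 1) = T i := by
      have h2 : (2 : ℝ) • γ (i + 1) = γ (i + 1 + 1) + γ (i + 1 - 1) := by
        rw [hmid (i + 1) hev1, smul_smul]; norm_num
      have e : i + 1 - 1 = i := by ring
      rw [e] at h2
      rw [two_smul] at h2
      rw [hT, hT, sub_eq_sub_iff_add_eq_add]
      exact h2.symm
    have ht1 : ‖T i‖ = 1 := by rw [hT]; exact hlen i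
    have e : i - 1 + 1 = i := by ring
    have hBm := hBeven (i - 1) hevm
    rw [e] at hBm
    have hcm := hcross (i - 1) hevm
    rw [e] at hcm
    have hBi : B i = B (i - 1) := hBodd i ho
    have hp := hBeven (i + 1) hev1
    have hc1 := hcross (i + 1) hev1
    rw [hTT] at hp hc1
    have hB1 : ‖B i‖ = 1 := by rw [hBi, hBm]; exact norm_smul_inv_norm hcm
    have hB2 : ‖B (i + 1)‖ = 1 := by rw [hp]; exact norm_smul_inv_norm hc1
    have hb1t : ⟪B i, T i⟫ = 0 := by
      rw [hBi, hBm, real_inner_smul_left, real_inner_comm, inner_cross3_right, mul_zero]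
    have hb2t : ⟪B (i + 1), T i⟫ = 0 := by
      rw [hp, real_inner_smul_left, real_inner_comm, inner_cross3_left, mul_zero]
    set t := T i with hteq
    set b1 := B i with hb1eq
    set b2 := B (i + 1) with hb2eq
    set d := b2 - b1 with hdeq
    set s := b2 + b1 with hseq
    set n := cross3 s t with hneq
    have hn : N (i + 1) + N i = n := by
      rw [hN (i + 1), hN i, hTT, hneq, hseq, cross3_add_left]
    have hnne : n ≠ 0 := hn ▸ hMN i
    have hds : ⟪d, s⟫ = 0 := by
      rw [hdeq, hseq, inner_sub_left, inner_add_right, inner_add_right,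
        real_inner_self_eq_norm_sq, real_inner_self_eq_norm_sq, real_inner_comm b1 b2,
        hB1, hB2]
      ring
    have hdt : ⟪d, t⟫ = 0 := by
      rw [hdeq, inner_sub_left, hb1t, hb2t]; ring
    have hcdn : cross3 d n = 0 := by
      rw [hneq, triple3, hdt, hds, zero_smul, zero_smul, sub_zero]
    have hpar : d = (⟪d, n⟫ / ‖n‖ ^ 2) • n := parallel_of_cross3_eq_zero hcdn hnne
    have hdn : ⟪d, n⟫ = 2 * ⟪b2, N i⟫ := by
      rw [hN i, ← hb1eq, ← hteq, hneq, hseq, cross3_add_left, hdeq,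
        inner_sub_left, inner_add_right, inner_add_right,
        inner_cross3_left, inner_cross3_left, inner_cross3_swap b1 b2 t]
      ring
    have hle : ⟪d, n⟫ ≤ 0 := by
      rw [hdn]
      have := htwist i ho
      rw [← hb2eq] at this
      linarith
    have hnn : ‖n‖ ≠ 0 := norm_ne_zero_iff.mpr hnne
    have hcle : ⟪d, n⟫ / ‖n‖ ^ 2 ≤ 0 :=
      div_nonpos_iff.mpr (Or.inr ⟨hle, sq_nonneg _⟩)
    have hnd : ‖d‖ = -(⟪d, n⟫) * ‖n‖⁻¹ := by
      conv_lhs => rw [hpar]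
      rw [norm_smul, Real.norm_eq_abs, abs_of_nonpos hcle]
      field_simp
    have hco : -(‖d‖) * ‖n‖⁻¹ = ⟪d, n⟫ / ‖n‖ ^ 2 := by
      rw [hnd, pow_two, div_eq_mul_inv, mul_inv]; ring
    rw [hNv i, hn, smul_smul, hco, ← hpar]
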